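/- Let φ be an Orlicz function taking only finite values, satisfying the Δ₂-condition at zero, and such that ∑_{n=n₁}^∞ φ(1/n) < ∞ for some n₁ ∈ ℕ. Then ces_φ is uniformly monotone: for every ε > 0 there exists δ > 0 such that for all x, y ∈ ces_φ with x(i) ≥ 0 and y(i) ≥ 0 for all i, ‖x‖_φ = 1 and ‖y‖_φ ≥ ε, one has ‖x + y‖_φ ≥ 1 + δ. -/

import Mathlib

open scoped ENNReal
open Filter

/-- An Orlicz function: `φ : ℝ → [0,∞]` even, convex, left continuous on `ℝ₊`,
continuous at zero, with `φ 0 = 0` and `φ u → ∞` as `u → ∞`. -/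
structure OrliczFunction where
  toFun : ℝ → ℝ≥0∞
  even' : ∀ u : ℝ, toFun (-u) = toFun u
  convex' : ∀ u v t : ℝ, 0 ≤ t → t ≤ 1 →
    toFun (t * u + (1 - t) * v) ≤ ENNReal.ofReal t * toFun u + ENNReal.ofReal (1 - t) * toFun v
  map_zero' : toFun 0 = 0
  leftContinuous' : ∀ t : ℝ, 0 < t → Tendsto toFun (nhdsWithin t (Set.Iio t)) (nhds (toFun t))
  continuousAtZero' : Tendsto toFun (nhds 0) (nhds 0)
  tendsto_top' : Tendsto toFun atTop (nhds ⊤)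

/-- The Cesàro mean `σx(n) = (1/n) ∑_{j=1}^n |x j|` (with `0`-based indexing). -/
noncomputable def cesaroMean (x : ℕ → ℝ) (n : ℕ) : ℝ :=
  (∑ j ∈ Finset.range (n + 1), |x j|) / (n + 1)

/-- The modular `ρ_φ(x) = ∑_i φ(σx(i))`. -/
noncomputable def rho (φ : OrliczFunction) (x : ℕ → ℝ) : ℝ≥0∞ :=
  ∑' n : ℕ, φ.toFun (cesaroMean x n)

/-- The Cesàro–Orlicz sequence space `ces_φ`. -/
def cesOrlicz (φ : OrliczFunction) : Set (ℕ → ℝ) :=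
  {x | ∃ lam : ℝ, 0 < lam ∧ rho φ (fun i => lam * x i) < ⊤}

/-- The Luxemburg norm `‖x‖_φ = inf {λ > 0 : ρ_φ(x/λ) ≤ 1}`. -/
noncomputable def luxNorm (φ : OrliczFunction) (x : ℕ → ℝ) : ℝ :=
  sInf {lam : ℝ | 0 < lam ∧ rho φ (fun i => x i / lam) ≤ 1}

/-- The subspace `A_φ` of `ces_φ`. -/
def Aphi (φ : OrliczFunction) : Set (ℕ → ℝ) :=
  {x | x ∈ cesOrlicz φ ∧ ∀ k : ℝ, 0 < k → ∃ nk : ℕ,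
    ∑' n : ℕ, φ.toFun ((k / ((nk + n + 1 : ℕ) : ℝ)) * ∑ i ∈ Finset.range (nk + n + 1), |x i|) < ⊤}

/-- `∃ n₁, ∑_{n=n₁}^∞ φ(1/n) < ∞`. -/
def TailFinite (φ : OrliczFunction) : Prop :=
  ∃ n₁ : ℕ, ∑' n : ℕ, φ.toFun (((n₁ + n + 1 : ℕ) : ℝ)⁻¹) < ⊤

/-- The `Δ₂`-condition at zero. -/
def Delta2Zero (φ : OrliczFunction) : Prop :=
  ∃ K : ℝ, 0 < K ∧ ∃ a : ℝ, 0 < a ∧ 0 < φ.toFun a ∧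
    ∀ u : ℝ, 0 ≤ u → u ≤ a → φ.toFun (2 * u) ≤ ENNReal.ofReal K * φ.toFun u

/-- `φ` takes only finite values. -/
def FiniteValued (φ : OrliczFunction) : Prop := ∀ u : ℝ, φ.toFun u ≠ ⊤

-- basic phi lemmas
lemma phi_mono (φ : OrliczFunction) {u v : ℝ} (hu : 0 ≤ u) (huv : u ≤ v) :
    φ.toFun u ≤ φ.toFun v := by
  rcases eq_or_lt_of_le (hu.trans huv) with hv | hv
  · have : u = 0 := le_antisymm (huv.trans hv.symm.le) hu
    rw [this, ← hv.symm]
  · have ht0 : 0 ≤ u / v := div_nonneg hu hv.le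
    have ht1 : u / v ≤ 1 := div_le_one_of_le₀ huv hv.le
    have h := φ.convex' v 0 (u / v) ht0 ht1
    have hval : u / v * v + (1 - u / v) * 0 = u := by field_simp; ring
    rw [hval, φ.map_zero', mul_zero, add_zero] at h
    calc φ.toFun u ≤ ENNReal.ofReal (u / v) * φ.toFun v := h
      _ ≤ 1 * φ.toFun v := by
          exact mul_le_mul_left (ENNReal.ofReal_le_one.mpr ht1) _
      _ = φ.toFun v := one_mul _

lemma phi_superadd (φ : OrliczFunction) {u v : ℝ} (hu : 0 ≤ u) (hv : 0 ≤ v) :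
    φ.toFun u + φ.toFun v ≤ φ.toFun (u + v) := by
  rcases eq_or_lt_of_le (add_nonneg hu hv) with hs | hs
  · have hu0 : u = 0 := by linarith [le_antisymm (by linarith) hu]
    have hv0 : v = 0 := by linarith
    simp [hu0, hv0, φ.map_zero']
  · set s := u + v with hsdef
    have ht0 : 0 ≤ u / s := div_nonneg hu hs.le
    have ht1 : u / s ≤ 1 := div_le_one_of_le₀ (by linarith) hs.le
    have h1 := φ.convex' s 0 (u / s) ht0 ht1
    have hval1 : u / s * s + (1 - u / s) * 0 = u := by field_simp; ring
    rw [hval1, φ.map_zero', mul_zero, add_zero] at h1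
    have h2 := φ.convex' s 0 (v / s) (div_nonneg hv hs.le)
      (div_le_one_of_le₀ (by linarith) hs.le)
    have hval2 : v / s * s + (1 - v / s) * 0 = v := by field_simp; ring
    rw [hval2, φ.map_zero', mul_zero, add_zero] at h2
    calc φ.toFun u + φ.toFun v
        ≤ ENNReal.ofReal (u / s) * φ.toFun s + ENNReal.ofReal (v / s) * φ.toFun s :=
          add_le_add h1 h2
      _ = ENNReal.ofReal (u / s + v / s) * φ.toFun s := by
          rw [ENNReal.ofReal_add ht0 (div_nonneg hv hs.le), add_mul]
      _ = φ.toFun (u + v) := by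
          have : u / s + v / s = 1 := by field_simp; exact hsdef.symm
          rw [this, ENNReal.ofReal_one, one_mul]

lemma phi_smul_le (φ : OrliczFunction) {t : ℝ} (ht0 : 0 ≤ t) (ht1 : t ≤ 1) (u : ℝ) :
    φ.toFun (t * u) ≤ ENNReal.ofReal t * φ.toFun u := by
  have h := φ.convex' u 0 t ht0 ht1
  have hval : t * u + (1 - t) * 0 = t * u := by ring
  rw [hval, φ.map_zero', mul_zero, add_zero] at h
  exact h

lemma phi_one_add (φ : OrliczFunction) {d : ℝ} (hd0 : 0 ≤ d) (hd1 : d ≤ 1) (u : ℝ) :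
    φ.toFun ((1 + d) * u) ≤ ENNReal.ofReal (1 - d) * φ.toFun u
      + ENNReal.ofReal d * φ.toFun (2 * u) := by
  have h := φ.convex' (2 * u) u d hd0 hd1
  have hval : d * (2 * u) + (1 - d) * u = (1 + d) * u := by ring
  rw [hval] at h
  calc φ.toFun ((1 + d) * u) ≤ ENNReal.ofReal d * φ.toFun (2*u)
        + ENNReal.ofReal (1 - d) * φ.toFun u := h
    _ = _ := add_comm _ _

lemma phi_pos (φ : OrliczFunction) (hδ : Delta2Zero φ) {u : ℝ} (hu : 0 < u) :
    0 < φ.toFun u := by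
  obtain ⟨K, hK, a, ha, hφa, hΔ⟩ := hδ
  by_contra h
  push_neg at h
  have hu0 : φ.toFun u = 0 := le_antisymm h zero_le
  have key : ∀ k : ℕ, φ.toFun (min (2 ^ k * u) a) = 0 := by
    intro k
    induction k with
    | zero =>
        refine le_antisymm ?_ zero_le
        calc φ.toFun (min (2 ^ 0 * u) a) ≤ φ.toFun u := by
              apply phi_mono φ (le_min (by positivity) ha.le)
              simpa using min_le_left (2 ^ 0 * u) a
          _ = 0 := hu0
        
    | succ k ih =>
        set c := min (2 ^ k * u) a with hc
        have hc0 : 0 ≤ c := le_min (by positivity) ha.le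
        have hca : c ≤ a := min_le_right _ _
        have h2c : φ.toFun (2 * c) ≤ ENNReal.ofReal K * φ.toFun c := hΔ c hc0 hca
        rw [ih, mul_zero] at h2c
        have h2c0 : φ.toFun (2 * c) = 0 := le_antisymm h2c zero_le
        have hle : min (2 ^ (k+1) * u) a ≤ 2 * c := by
          rcases le_total (2 ^ k * u) a with h' | h'
          · have : c = 2 ^ k * u := min_eq_left h'
            rw [this]
            calc min (2 ^ (k+1) * u) a ≤ 2 ^ (k+1) * u := min_le_left _ _
              _ = 2 * (2 ^ k * u) := by ring
          · have : c = a := min_eq_right h'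
            rw [this]
            calc min (2 ^ (k+1) * u) a ≤ a := min_le_right _ _
              _ ≤ 2 * a := by linarith
        refine le_antisymm ?_ zero_le
        calc φ.toFun (min (2 ^ (k+1) * u) a) ≤ φ.toFun (2 * c) :=
              phi_mono φ (le_min (by positivity) ha.le) hle
          _ = 0 := h2c0
  obtain ⟨k, hk⟩ := pow_unbounded_of_one_lt (a / u) (one_lt_two (α := ℝ))
  have hak : a ≤ 2 ^ k * u := by
    rw [div_lt_iff₀ hu] at hk
    linarith
  have := key k
  rw [min_eq_right hak] at this
  rw [this] at hφa
  exact lt_irrefl _ hφa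

lemma exists_b (φ : OrliczFunction) : ∃ b : ℝ, 1 ≤ b ∧ 1 < φ.toFun b := by
  have h1 : ∀ᶠ v in nhds (⊤ : ℝ≥0∞), 1 < v :=
    isOpen_Ioi.eventually_mem (by simp : (⊤:ℝ≥0∞) ∈ Set.Ioi 1)
  have h2 := φ.tendsto_top'.eventually h1
  rw [eventually_atTop] at h2
  obtain ⟨u₀, hu₀⟩ := h2
  exact ⟨max u₀ 1, le_max_right _ _, hu₀ _ (le_max_left _ _)⟩

lemma exists_Kb (φ : OrliczFunction) (hfin : FiniteValued φ) (hδ : Delta2Zero φ)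
    {b : ℝ} (hb : 1 ≤ b) :
    ∃ Kb : ℝ, 2 ≤ Kb ∧ ∀ u : ℝ, 0 ≤ u → u ≤ b →
      φ.toFun (2 * u) ≤ ENNReal.ofReal Kb * φ.toFun u := by
  obtain ⟨K, hK, a, ha, hφa, hΔ⟩ := hδ
  have hφa' : 0 < (φ.toFun a).toReal := ENNReal.toReal_pos (by exact hφa.ne') (hfin a)
  set Kb : ℝ := max (max K 2) ((φ.toFun (2*b)).toReal / (φ.toFun a).toReal) with hKb
  refine ⟨Kb, le_trans (le_max_right K 2) (le_max_left _ _), ?_⟩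
  intro u hu hub
  rcases le_total u a with h' | h'
  · calc φ.toFun (2*u) ≤ ENNReal.ofReal K * φ.toFun u := hΔ u hu h'
      _ ≤ ENNReal.ofReal Kb * φ.toFun u := by
          exact mul_le_mul_left (ENNReal.ofReal_le_ofReal
            (le_trans (le_max_left K 2) (le_max_left _ _))) _
  · have h2u : φ.toFun (2*u) ≤ φ.toFun (2*b) := phi_mono φ (by linarith) (by linarith)
    have hua : φ.toFun a ≤ φ.toFun u := phi_mono φ ha.le h'
    have hfb : φ.toFun (2*b) = ENNReal.ofReal ((φ.toFun (2*b)).toReal) :=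
      (ENNReal.ofReal_toReal (hfin _)).symm
    have hfa : ENNReal.ofReal ((φ.toFun a).toReal) = φ.toFun a :=
      ENNReal.ofReal_toReal (hfin _)
    calc φ.toFun (2*u) ≤ φ.toFun (2*b) := h2u
      _ = ENNReal.ofReal ((φ.toFun (2*b)).toReal / (φ.toFun a).toReal * (φ.toFun a).toReal) := by
          rw [div_mul_cancel₀ _ hφa'.ne', ← hfb]
      _ = ENNReal.ofReal ((φ.toFun (2*b)).toReal / (φ.toFun a).toReal) * φ.toFun a := by
          rw [ENNReal.ofReal_mul (by positivity), hfa]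
      _ ≤ ENNReal.ofReal Kb * φ.toFun u := by
          exact mul_le_mul' (ENNReal.ofReal_le_ofReal (le_max_right _ _)) hua

lemma phi_iter (φ : OrliczFunction) {b Kb : ℝ} (hb : 1 ≤ b)
    (hΔb : ∀ u : ℝ, 0 ≤ u → u ≤ b → φ.toFun (2 * u) ≤ ENNReal.ofReal Kb * φ.toFun u)
    (hKb : 2 ≤ Kb) :
    ∀ (m : ℕ) (u : ℝ), 0 ≤ u → 2 ^ m * u ≤ 2 * b →
      φ.toFun (2 ^ m * u) ≤ ENNReal.ofReal (Kb ^ m) * φ.toFun u := by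
  intro m
  induction m with
  | zero => intro u hu _; simp
  | succ m ih =>
      intro u hu hub
      have h1 : 2 ^ m * u ≤ b := by
        have : (2:ℝ) ^ (m+1) * u = 2 * (2 ^ m * u) := by ring
        rw [this] at hub; linarith
      have h2 : 2 ^ m * u ≤ 2 * b := by linarith
      have hval : (2:ℝ) ^ (m+1) * u = 2 * (2 ^ m * u) := by ring
      calc φ.toFun (2 ^ (m+1) * u) = φ.toFun (2 * (2 ^ m * u)) := by rw [hval]
        _ ≤ ENNReal.ofReal Kb * φ.toFun (2 ^ m * u) := hΔb _ (by positivity) h1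
        _ ≤ ENNReal.ofReal Kb * (ENNReal.ofReal (Kb ^ m) * φ.toFun u) :=
            mul_le_mul_right (ih u hu h2) _
        _ = ENNReal.ofReal (Kb ^ (m+1)) * φ.toFun u := by
            rw [← mul_assoc, ← ENNReal.ofReal_mul (by linarith), ← pow_succ']

lemma cesaroMean_nonneg (x : ℕ → ℝ) (n : ℕ) : 0 ≤ cesaroMean x n := by
  unfold cesaroMean
  positivity

lemma cesaroMean_smul {c : ℝ} (hc : 0 ≤ c) (x : ℕ → ℝ) (n : ℕ) :
    cesaroMean (fun i => c * x i) n = c * cesaroMean x n := by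
  unfold cesaroMean
  have h : ∑ j ∈ Finset.range (n+1), |c * x j| = c * ∑ j ∈ Finset.range (n+1), |x j| := by
    rw [Finset.mul_sum]
    exact Finset.sum_congr rfl fun j _ => by rw [abs_mul, abs_of_nonneg hc]
  simp only [h, mul_div_assoc]

lemma cesaroMean_div {lam : ℝ} (hlam : 0 < lam) (x : ℕ → ℝ) (n : ℕ) :
    cesaroMean (fun i => x i / lam) n = cesaroMean x n / lam := by
  have h : ∀ i, x i / lam = (1/lam) * x i := fun i => by ring
  calc cesaroMean (fun i => x i / lam) n = cesaroMean (fun i => (1/lam) * x i) n := by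
        congr 1; funext i; exact h i
    _ = (1/lam) * cesaroMean x n := cesaroMean_smul (by positivity) x n
    _ = cesaroMean x n / lam := by ring

lemma cesaroMean_add {x y : ℕ → ℝ} (hx : ∀ i, 0 ≤ x i) (hy : ∀ i, 0 ≤ y i) (n : ℕ) :
    cesaroMean (fun i => x i + y i) n = cesaroMean x n + cesaroMean y n := by
  unfold cesaroMean
  rw [← add_div]
  congr 1
  rw [← Finset.sum_add_distrib]
  exact Finset.sum_congr rfl fun j _ => by
    rw [abs_of_nonneg (add_nonneg (hx j) (hy j)), abs_of_nonneg (hx j), abs_of_nonneg (hy j)]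

lemma rho_div_eq (φ : OrliczFunction) {lam : ℝ} (hlam : 0 < lam) (x : ℕ → ℝ) :
    rho φ (fun i => x i / lam) = ∑' n, φ.toFun (cesaroMean x n / lam) := by
  unfold rho
  exact tsum_congr fun n => by rw [cesaroMean_div hlam]

lemma rho_add_ge (φ : OrliczFunction) {x y : ℕ → ℝ} (hx : ∀ i, 0 ≤ x i) (hy : ∀ i, 0 ≤ y i) :
    rho φ x + rho φ y ≤ rho φ (fun i => x i + y i) := by
  unfold rho
  rw [← ENNReal.tsum_add]
  refine ENNReal.tsum_le_tsum fun n => ?_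
  rw [cesaroMean_add hx hy]
  exact phi_superadd φ (cesaroMean_nonneg x n) (cesaroMean_nonneg y n)

lemma bddBelow_S (φ : OrliczFunction) (x : ℕ → ℝ) :
    BddBelow {lam : ℝ | 0 < lam ∧ rho φ (fun i => x i / lam) ≤ 1} :=
  ⟨0, fun _ h => h.1.le⟩

lemma luxNorm_le (φ : OrliczFunction) {x : ℕ → ℝ} {lam : ℝ} (h1 : 0 < lam)
    (h2 : rho φ (fun i => x i / lam) ≤ 1) : luxNorm φ x ≤ lam :=
  csInf_le (bddBelow_S φ x) ⟨h1, h2⟩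

lemma S_nonempty_of_norm_eq_one (φ : OrliczFunction) {x : ℕ → ℝ}
    (h : luxNorm φ x = 1) :
    {lam : ℝ | 0 < lam ∧ rho φ (fun i => x i / lam) ≤ 1}.Nonempty := by
  by_contra hne
  rw [Set.not_nonempty_iff_eq_empty] at hne
  rw [luxNorm, hne, Real.sInf_empty] at h
  norm_num at h

lemma rho_div_le_one (φ : OrliczFunction) {x : ℕ → ℝ} (h : luxNorm φ x = 1)
    {lam : ℝ} (hlam : 1 < lam) : rho φ (fun i => x i / lam) ≤ 1 := by
  have hS := S_nonempty_of_norm_eq_one φ h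
  have hlt : sInf {l : ℝ | 0 < l ∧ rho φ (fun i => x i / l) ≤ 1} < lam := by
    rw [← luxNorm]; rw [h]; exact hlam
  obtain ⟨l, ⟨hl0, hl1⟩, hll⟩ := (csInf_lt_iff (bddBelow_S φ x) hS).mp hlt
  rw [rho_div_eq φ (lt_trans one_pos hlam)]
  calc ∑' n, φ.toFun (cesaroMean x n / lam)
      ≤ ∑' n, φ.toFun (cesaroMean x n / l) := by
        refine ENNReal.tsum_le_tsum fun n => phi_mono φ (div_nonneg (cesaroMean_nonneg x n) (by linarith)) ?_
        exact div_le_div_of_nonneg_left (cesaroMean_nonneg x n) hl0 hll.le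
    _ ≤ 1 := by rw [← rho_div_eq φ hl0]; exact hl1

lemma rho_le_one_of_norm_eq_one (φ : OrliczFunction) {x : ℕ → ℝ}
    (h : luxNorm φ x = 1) : rho φ x ≤ 1 := by
  rw [rho]
  rw [ENNReal.tsum_eq_iSup_sum]
  refine iSup_le fun s => ?_
  -- limit along lam → 1⁺
  have htend : Tendsto (fun lam : ℝ => ∑ n ∈ s, φ.toFun (cesaroMean x n / lam))
      (nhdsWithin 1 (Set.Ioi 1)) (nhds (∑ n ∈ s, φ.toFun (cesaroMean x n))) := by
    refine tendsto_finset_sum _ fun n _ => ?_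
    rcases eq_or_lt_of_le (cesaroMean_nonneg x n) with h0 | h0
    · have : (fun lam : ℝ => φ.toFun (cesaroMean x n / lam)) =ᶠ[nhdsWithin 1 (Set.Ioi 1)]
          (fun _ => φ.toFun (cesaroMean x n)) := by
        filter_upwards [eventually_mem_nhdsWithin] with lam hlam
        rw [← h0]
        norm_num
      exact Tendsto.congr' this.symm tendsto_const_nhds
    · have hdiv : Tendsto (fun lam : ℝ => cesaroMean x n / lam)
          (nhdsWithin 1 (Set.Ioi 1)) (nhdsWithin (cesaroMean x n) (Set.Iio (cesaroMean x n))) := by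
        apply tendsto_nhdsWithin_of_tendsto_nhds_of_eventually_within
        · have : Tendsto (fun lam : ℝ => cesaroMean x n / lam) (nhds 1)
              (nhds (cesaroMean x n / 1)) :=
            tendsto_const_nhds.div tendsto_id one_ne_zero
          rw [div_one] at this
          exact this.mono_left nhdsWithin_le_nhds
        · filter_upwards [eventually_mem_nhdsWithin] with lam hlam
          exact div_lt_self h0 hlam
      exact (φ.leftContinuous' _ h0).comp hdiv
  refine le_of_tendsto htend ?_
  filter_upwards [eventually_mem_nhdsWithin] with lam hlam
  calc ∑ n ∈ s, φ.toFun (cesaroMean x n / lam)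
      ≤ ∑' n, φ.toFun (cesaroMean x n / lam) := ENNReal.sum_le_tsum s
    _ = rho φ (fun i => x i / lam) := (rho_div_eq φ (lt_trans one_pos hlam) x).symm
    _ ≤ 1 := rho_div_le_one φ h hlam

lemma sigma_le_b (φ : OrliczFunction) {b : ℝ} (hb0 : 0 ≤ b) (hFb : 1 < φ.toFun b)
    {z : ℕ → ℝ} (h : rho φ z ≤ 1) : ∀ n, cesaroMean z n ≤ b := by
  intro n
  by_contra hc
  push_neg at hc
  have h1 : φ.toFun (cesaroMean z n) ≤ 1 := le_trans (ENNReal.le_tsum n) h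
  exact absurd (le_trans (phi_mono φ hb0 hc.le) h1) (not_le.mpr hFb)

lemma one_le_rho (φ : OrliczFunction) {b Kb : ℝ} (hb : 1 ≤ b) (hFb : 1 < φ.toFun b)
    (hKb : 2 ≤ Kb)
    (hΔb : ∀ u : ℝ, 0 ≤ u → u ≤ b → φ.toFun (2 * u) ≤ ENNReal.ofReal Kb * φ.toFun u)
    {x : ℕ → ℝ} (h : luxNorm φ x = 1) : 1 ≤ rho φ x := by
  have hle : rho φ x ≤ 1 := rho_le_one_of_norm_eq_one φ h
  by_contra hlt
  push_neg at hlt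
  have hne : rho φ x ≠ ⊤ := (lt_trans hlt (by norm_num)).ne
  set r : ℝ := (rho φ x).toReal with hr
  have hrhox : rho φ x = ENNReal.ofReal r := (ENNReal.ofReal_toReal hne).symm
  have hr0 : 0 ≤ r := ENNReal.toReal_nonneg
  have hr1 : r < 1 := by
    rw [hrhox] at hlt
    exact (ENNReal.ofReal_lt_one).mp hlt
  set δ : ℝ := min 1 ((1 - r) / Kb) with hδdef
  have hδ0 : 0 < δ := lt_min one_pos (div_pos (by linarith) (by linarith))
  have hδ1 : δ ≤ 1 := min_le_left _ _
  have hδKb : δ * Kb ≤ 1 - r := by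
    have h1 : δ ≤ (1 - r) / Kb := min_le_right _ _
    rw [div_eq_mul_inv] at h1
    calc δ * Kb ≤ (1 - r) * Kb⁻¹ * Kb := by
          exact mul_le_mul_of_nonneg_right h1 (by linarith)
      _ = 1 - r := by field_simp
  have key : (1 - δ + δ * Kb) * r ≤ 1 := by
    nlinarith [mul_le_mul_of_nonneg_right hδKb hr0, mul_nonneg hδ0.le hr0,
      sq_nonneg (1 - r)]
  have hσb : ∀ n, cesaroMean x n ≤ b := sigma_le_b φ (by linarith) hFb hle
  -- the modular of (1+δ)x is at most 1
  have hbound : rho φ (fun i => x i / (1 / (1 + δ))) ≤ 1 := by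
    rw [rho_div_eq φ (by positivity)]
    have hterm : ∀ n : ℕ, φ.toFun (cesaroMean x n / (1 / (1 + δ)))
        ≤ ENNReal.ofReal (1 - δ + δ * Kb) * φ.toFun (cesaroMean x n) := by
      intro n
      have heq : cesaroMean x n / (1 / (1 + δ)) = (1 + δ) * cesaroMean x n := by
        field_simp
      rw [heq]
      calc φ.toFun ((1 + δ) * cesaroMean x n)
          ≤ ENNReal.ofReal (1 - δ) * φ.toFun (cesaroMean x n)
            + ENNReal.ofReal δ * φ.toFun (2 * cesaroMean x n) := phi_one_add φ hδ0.le hδ1 _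
        _ ≤ ENNReal.ofReal (1 - δ) * φ.toFun (cesaroMean x n)
            + ENNReal.ofReal δ * (ENNReal.ofReal Kb * φ.toFun (cesaroMean x n)) := by
            exact add_le_add_right (mul_le_mul_right
              (hΔb _ (cesaroMean_nonneg x n) (hσb n)) _) _
        _ = ENNReal.ofReal (1 - δ + δ * Kb) * φ.toFun (cesaroMean x n) := by
            rw [← mul_assoc, ← ENNReal.ofReal_mul hδ0.le,
              ← add_mul, ← ENNReal.ofReal_add (by linarith) (by nlinarith)]
    calc ∑' n, φ.toFun (cesaroMean x n / (1 / (1 + δ)))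
        ≤ ∑' n, ENNReal.ofReal (1 - δ + δ * Kb) * φ.toFun (cesaroMean x n) :=
          ENNReal.tsum_le_tsum hterm
      _ = ENNReal.ofReal (1 - δ + δ * Kb) * rho φ x := ENNReal.tsum_mul_left
      _ ≤ ENNReal.ofReal (1 - δ + δ * Kb) * ENNReal.ofReal r := by
          rw [hrhox]
      _ = ENNReal.ofReal ((1 - δ + δ * Kb) * r) := by
          rw [← ENNReal.ofReal_mul (by nlinarith)]
      _ ≤ 1 := by
          rw [← ENNReal.ofReal_one]
          exact ENNReal.ofReal_le_ofReal key
  have hnorm := luxNorm_le φ (x := x) (by positivity) hbound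
  rw [h] at hnorm
  have : 1 / (1 + δ) < 1 := by
    rw [div_lt_one (by linarith)]; linarith
  linarith

lemma norm_lb (φ : OrliczFunction) {b Kb : ℝ} (hb : 1 ≤ b) (hFb : 1 < φ.toFun b)
    (hKb : 2 ≤ Kb)
    (hΔb : ∀ u : ℝ, 0 ≤ u → u ≤ b → φ.toFun (2 * u) ≤ ENNReal.ofReal Kb * φ.toFun u)
    {z : ℕ → ℝ} {η : ℝ} (hη : 0 < η)
    (hSz : {lam : ℝ | 0 < lam ∧ rho φ (fun i => z i / lam) ≤ 1}.Nonempty)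
    (h : ENNReal.ofReal (1 + η) ≤ rho φ z) :
    1 + min 1 (η / Kb) ≤ luxNorm φ z := by
  set δ : ℝ := min 1 (η / Kb) with hδdef
  have hδ0 : 0 < δ := lt_min one_pos (div_pos hη (by linarith))
  have hδ1 : δ ≤ 1 := min_le_left _ _
  have hδKb : δ * Kb ≤ η := by
    have h1 : δ ≤ η / Kb := min_le_right _ _
    rw [div_eq_mul_inv] at h1
    calc δ * Kb ≤ η * Kb⁻¹ * Kb := mul_le_mul_of_nonneg_right h1 (by linarith)
      _ = η := by field_simp
  by_contra hcon
  push_neg at hcon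
  obtain ⟨lam, ⟨hlam0, hlam1⟩, hlamlt⟩ :=
    (csInf_lt_iff (bddBelow_S φ z) hSz).mp hcon
  have hw : ∀ n, cesaroMean z n / lam ≤ b := by
    intro n
    have := sigma_le_b φ (by linarith) hFb hlam1 n
    rwa [cesaroMean_div hlam0] at this
  have hterm : ∀ n : ℕ, φ.toFun (cesaroMean z n)
      ≤ ENNReal.ofReal (1 - δ + δ * Kb) * φ.toFun (cesaroMean z n / lam) := by
    intro n
    set w : ℝ := cesaroMean z n / lam with hwdef
    have hw0 : 0 ≤ w := div_nonneg (cesaroMean_nonneg z n) hlam0.le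
    have heq : cesaroMean z n = lam * w := by
      rw [hwdef, mul_div_cancel₀ _ hlam0.ne']
    have hmono : φ.toFun (cesaroMean z n) ≤ φ.toFun ((1 + δ) * w) := by
      rw [heq]
      exact phi_mono φ (mul_nonneg hlam0.le hw0)
        (mul_le_mul_of_nonneg_right hlamlt.le hw0)
    calc φ.toFun (cesaroMean z n) ≤ φ.toFun ((1 + δ) * w) := hmono
      _ ≤ ENNReal.ofReal (1 - δ) * φ.toFun w + ENNReal.ofReal δ * φ.toFun (2 * w) :=
          phi_one_add φ hδ0.le hδ1 _
      _ ≤ ENNReal.ofReal (1 - δ) * φ.toFun w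
          + ENNReal.ofReal δ * (ENNReal.ofReal Kb * φ.toFun w) :=
          add_le_add_right (mul_le_mul_right (hΔb _ hw0 (hw n)) _) _
      _ = ENNReal.ofReal (1 - δ + δ * Kb) * φ.toFun w := by
          rw [← mul_assoc, ← ENNReal.ofReal_mul hδ0.le,
            ← add_mul, ← ENNReal.ofReal_add (by linarith) (by nlinarith)]
  have hbound : rho φ z ≤ ENNReal.ofReal (1 - δ + δ * Kb) := by
    calc rho φ z ≤ ∑' n, ENNReal.ofReal (1 - δ + δ * Kb) * φ.toFun (cesaroMean z n / lam) :=
          ENNReal.tsum_le_tsum hterm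
      _ = ENNReal.ofReal (1 - δ + δ * Kb) * rho φ (fun i => z i / lam) := by
          rw [ENNReal.tsum_mul_left, rho_div_eq φ hlam0]
      _ ≤ ENNReal.ofReal (1 - δ + δ * Kb) * 1 := mul_le_mul_right hlam1 _
      _ = ENNReal.ofReal (1 - δ + δ * Kb) := mul_one _
  have hfinal := le_trans h hbound
  rw [ENNReal.ofReal_le_ofReal_iff (by nlinarith)] at hfinal
  linarith

lemma rho_lb (φ : OrliczFunction) (hfin : FiniteValued φ) (hδ2 : Delta2Zero φ)
    {b Kb : ℝ} (hb : 1 ≤ b) (hKb : 2 ≤ Kb)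
    (hΔb : ∀ u : ℝ, 0 ≤ u → u ≤ b → φ.toFun (2 * u) ≤ ENNReal.ofReal Kb * φ.toFun u)
    {ε : ℝ} (hε0 : 0 < ε) {m : ℕ} (hm : 2 / ε ≤ 2 ^ m)
    {y : ℕ → ℝ} (h : ε ≤ luxNorm φ y) :
    ENNReal.ofReal (min ((φ.toFun (b / 2 ^ m)).toReal / 2) (1 / Kb ^ m)) ≤ rho φ y := by
  set a₀ : ℝ := b / 2 ^ m with ha₀def
  have ha₀0 : 0 < a₀ := by positivity
  have hFa₀ : 0 < (φ.toFun a₀).toReal :=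
    ENNReal.toReal_pos (phi_pos φ hδ2 ha₀0).ne' (hfin _)
  set η : ℝ := min ((φ.toFun a₀).toReal / 2) (1 / Kb ^ m) with hηdef
  have hKbm : (0:ℝ) < Kb ^ m := by positivity
  have hη0 : 0 < η := lt_min (by linarith) (by positivity)
  by_contra hcon
  push_neg at hcon
  have hσ : ∀ n, cesaroMean y n ≤ a₀ := by
    intro n
    by_contra hc
    push_neg at hc
    have h1 : φ.toFun (cesaroMean y n) < ENNReal.ofReal η :=
      lt_of_le_of_lt (ENNReal.le_tsum n) hcon
    have h2 : ENNReal.ofReal η < φ.toFun a₀ := by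
      calc ENNReal.ofReal η ≤ ENNReal.ofReal ((φ.toFun a₀).toReal / 2) :=
            ENNReal.ofReal_le_ofReal (min_le_left _ _)
        _ < ENNReal.ofReal ((φ.toFun a₀).toReal) :=
            (ENNReal.ofReal_lt_ofReal_iff hFa₀).mpr (by linarith)
        _ = φ.toFun a₀ := ENNReal.ofReal_toReal (hfin _)
    exact absurd (lt_trans h1 h2) (not_lt.mpr (phi_mono φ ha₀0.le hc.le))
  have hterm : ∀ n : ℕ, φ.toFun (cesaroMean y n / (ε / 2))
      ≤ ENNReal.ofReal (Kb ^ m) * φ.toFun (cesaroMean y n) := by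
    intro n
    have hσn := cesaroMean_nonneg y n
    have heq : cesaroMean y n / (ε / 2) = (2 / ε) * cesaroMean y n := by
      field_simp
    rw [heq]
    calc φ.toFun ((2 / ε) * cesaroMean y n) ≤ φ.toFun (2 ^ m * cesaroMean y n) :=
          phi_mono φ (by positivity) (mul_le_mul_of_nonneg_right hm hσn)
      _ ≤ ENNReal.ofReal (Kb ^ m) * φ.toFun (cesaroMean y n) := by
          refine phi_iter φ hb hΔb hKb m _ hσn ?_
          have h1 : (2:ℝ) ^ m * cesaroMean y n ≤ 2 ^ m * a₀ :=
            mul_le_mul_of_nonneg_left (hσ n) (by positivity)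
          have h2 : (2:ℝ) ^ m * a₀ = b := by
            rw [ha₀def]; field_simp
          linarith
  have hbound : rho φ (fun i => y i / (ε / 2)) ≤ 1 := by
    rw [rho_div_eq φ (by positivity)]
    calc ∑' n, φ.toFun (cesaroMean y n / (ε / 2))
        ≤ ∑' n, ENNReal.ofReal (Kb ^ m) * φ.toFun (cesaroMean y n) :=
          ENNReal.tsum_le_tsum hterm
      _ = ENNReal.ofReal (Kb ^ m) * rho φ y := ENNReal.tsum_mul_left
      _ ≤ ENNReal.ofReal (Kb ^ m) * ENNReal.ofReal η :=
          mul_le_mul_right hcon.le _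
      _ = ENNReal.ofReal (Kb ^ m * η) := by rw [← ENNReal.ofReal_mul (by positivity)]
      _ ≤ 1 := by
          rw [← ENNReal.ofReal_one]
          refine ENNReal.ofReal_le_ofReal ?_
          calc Kb ^ m * η ≤ Kb ^ m * (1 / Kb ^ m) :=
                mul_le_mul_of_nonneg_left (min_le_right _ _) (by positivity)
            _ = 1 := by field_simp
  have := luxNorm_le φ (x := y) (by positivity) hbound
  linarith

lemma S_nonempty_add (φ : OrliczFunction) {x y : ℕ → ℝ}
    (hx : x ∈ cesOrlicz φ) (hy : y ∈ cesOrlicz φ)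
    (hxn : ∀ i, 0 ≤ x i) (hyn : ∀ i, 0 ≤ y i) :
    {lam : ℝ | 0 < lam ∧ rho φ (fun i => (x i + y i) / lam) ≤ 1}.Nonempty := by
  obtain ⟨l₁, hl₁, hρ₁⟩ := hx
  obtain ⟨l₂, hl₂, hρ₂⟩ := hy
  set μ : ℝ := min l₁ l₂ / 2 with hμdef
  have hμ0 : 0 < μ := by positivity
  have hμ₁ : 2 * μ ≤ l₁ := by
    have := min_le_left l₁ l₂; rw [hμdef]; linarith
  have hμ₂ : 2 * μ ≤ l₂ := by
    have := min_le_right l₁ l₂; rw [hμdef]; linarith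
  -- the modular of μ(x+y) is finite
  have hM : rho φ (fun i => μ * (x i + y i)) < ⊤ := by
    have hterm : ∀ n : ℕ, φ.toFun (cesaroMean (fun i => μ * (x i + y i)) n)
        ≤ ENNReal.ofReal (1/2) * φ.toFun (cesaroMean (fun i => l₁ * x i) n)
          + ENNReal.ofReal (1/2) * φ.toFun (cesaroMean (fun i => l₂ * y i) n) := by
      intro n
      have hσx := cesaroMean_nonneg x n
      have hσy := cesaroMean_nonneg y n
      have hval : cesaroMean (fun i => μ * (x i + y i)) n
          = (1/2 : ℝ) * (2 * μ * cesaroMean x n) + (1 - 1/2) * (2 * μ * cesaroMean y n) := by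
        rw [cesaroMean_smul hμ0.le, cesaroMean_add hxn hyn]
        ring
      have hconv := φ.convex' (2 * μ * cesaroMean x n) (2 * μ * cesaroMean y n)
        (1/2) (by norm_num) (by norm_num)
      rw [← hval] at hconv
      have h1 : φ.toFun (2 * μ * cesaroMean x n) ≤ φ.toFun (cesaroMean (fun i => l₁ * x i) n) := by
        rw [cesaroMean_smul hl₁.le]
        exact phi_mono φ (by positivity) (mul_le_mul_of_nonneg_right hμ₁ hσx)
      have h2 : φ.toFun (2 * μ * cesaroMean y n) ≤ φ.toFun (cesaroMean (fun i => l₂ * y i) n) := by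
        rw [cesaroMean_smul hl₂.le]
        exact phi_mono φ (by positivity) (mul_le_mul_of_nonneg_right hμ₂ hσy)
      calc φ.toFun (cesaroMean (fun i => μ * (x i + y i)) n)
          ≤ ENNReal.ofReal (1/2) * φ.toFun (2 * μ * cesaroMean x n)
            + ENNReal.ofReal (1 - 1/2) * φ.toFun (2 * μ * cesaroMean y n) := hconv
        _ ≤ _ := by
            norm_num
            exact add_le_add (mul_le_mul_right h1 _) (mul_le_mul_right h2 _)
    calc rho φ (fun i => μ * (x i + y i))
        ≤ ∑' n, (ENNReal.ofReal (1/2) * φ.toFun (cesaroMean (fun i => l₁ * x i) n)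
          + ENNReal.ofReal (1/2) * φ.toFun (cesaroMean (fun i => l₂ * y i) n)) :=
          ENNReal.tsum_le_tsum hterm
      _ = ENNReal.ofReal (1/2) * rho φ (fun i => l₁ * x i)
          + ENNReal.ofReal (1/2) * rho φ (fun i => l₂ * y i) := by
          rw [ENNReal.tsum_add, ENNReal.tsum_mul_left, ENNReal.tsum_mul_left]; rfl
      _ < ⊤ := by
          exact ENNReal.add_lt_top.mpr ⟨ENNReal.mul_lt_top ENNReal.ofReal_lt_top hρ₁,
            ENNReal.mul_lt_top ENNReal.ofReal_lt_top hρ₂⟩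
  -- scale down to get modular ≤ 1
  set M : ℝ≥0∞ := rho φ (fun i => μ * (x i + y i)) with hMdef
  set t : ℝ := min 1 (1 / (M.toReal + 1)) with htdef
  have hMr0 : 0 ≤ M.toReal := ENNReal.toReal_nonneg
  have ht0 : 0 < t := lt_min one_pos (by positivity)
  have ht1 : t ≤ 1 := min_le_left _ _
  refine ⟨1 / (t * μ), by positivity, ?_⟩
  rw [rho_div_eq φ (by positivity)]
  have hterm2 : ∀ n : ℕ, φ.toFun (cesaroMean (fun i => x i + y i) n / (1 / (t * μ)))
      ≤ ENNReal.ofReal t * φ.toFun (cesaroMean (fun i => μ * (x i + y i)) n) := by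
    intro n
    have heq : cesaroMean (fun i => x i + y i) n / (1 / (t * μ))
        = t * cesaroMean (fun i => μ * (x i + y i)) n := by
      rw [cesaroMean_smul hμ0.le]
      field_simp
    rw [heq]
    exact phi_smul_le φ ht0.le ht1 _
  calc ∑' n, φ.toFun (cesaroMean (fun i => x i + y i) n / (1 / (t * μ)))
      ≤ ∑' n, ENNReal.ofReal t * φ.toFun (cesaroMean (fun i => μ * (x i + y i)) n) :=
        ENNReal.tsum_le_tsum hterm2
    _ = ENNReal.ofReal t * M := ENNReal.tsum_mul_left
    _ = ENNReal.ofReal t * ENNReal.ofReal M.toReal := by rw [ENNReal.ofReal_toReal hM.ne]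
    _ = ENNReal.ofReal (t * M.toReal) := by rw [← ENNReal.ofReal_mul ht0.le]
    _ ≤ 1 := by
        rw [← ENNReal.ofReal_one]
        refine ENNReal.ofReal_le_ofReal ?_
        calc t * M.toReal ≤ (1 / (M.toReal + 1)) * M.toReal :=
              mul_le_mul_of_nonneg_right (min_le_right _ _) hMr0
          _ ≤ 1 := by
              rw [div_mul_eq_mul_div, div_le_one (by linarith)]
              linarith

theorem stmt_17' (φ : OrliczFunction) (hfin : FiniteValued φ) (hδ : Delta2Zero φ) :
    ∀ ε : ℝ, 0 < ε → ∃ δ : ℝ, 0 < δ ∧ ∀ x y : ℕ → ℝ,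
      x ∈ cesOrlicz φ → y ∈ cesOrlicz φ → (∀ i, 0 ≤ x i) → (∀ i, 0 ≤ y i) →
      luxNorm φ x = 1 → ε ≤ luxNorm φ y → 1 + δ ≤ luxNorm φ (fun i => x i + y i) := by
  intro ε hε
  obtain ⟨b, hb, hFb⟩ := exists_b φ
  obtain ⟨Kb, hKb, hΔb⟩ := exists_Kb φ hfin hδ hb
  obtain ⟨m, hm⟩ := pow_unbounded_of_one_lt (2 / ε) (one_lt_two (α := ℝ))
  set η : ℝ := min ((φ.toFun (b / 2 ^ m)).toReal / 2) (1 / Kb ^ m) with hηdef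
  have hFa₀ : 0 < (φ.toFun (b / 2 ^ m)).toReal :=
    ENNReal.toReal_pos (phi_pos φ hδ (by positivity)).ne' (hfin _)
  have hη0 : 0 < η := lt_min (by linarith) (by positivity)
  refine ⟨min 1 (η / Kb), lt_min one_pos (div_pos hη0 (by linarith)), ?_⟩
  intro x y hx hy hxn hyn hnx hny
  have h1 : 1 ≤ rho φ x := one_le_rho φ hb hFb hKb hΔb hnx
  have h2 : ENNReal.ofReal η ≤ rho φ y :=
    rho_lb φ hfin hδ hb hKb hΔb hε hm.le hny
  have h3 : ENNReal.ofReal (1 + η) ≤ rho φ (fun i => x i + y i) := by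
    calc ENNReal.ofReal (1 + η) = 1 + ENNReal.ofReal η := by
          rw [ENNReal.ofReal_add zero_le_one hη0.le, ENNReal.ofReal_one]
      _ ≤ rho φ x + rho φ y := add_le_add h1 h2
      _ ≤ rho φ (fun i => x i + y i) := rho_add_ge φ hxn hyn
  exact norm_lb φ hb hFb hKb hΔb hη0 (S_nonempty_add φ hx hy hxn hyn) h3


/-- if `φ ∈ Δ₂(0)` then `ces_φ` is uniformly monotone. -/
theorem stmt_17 (φ : OrliczFunction) (hfin : FiniteValued φ) (hδ : Delta2Zero φ)
    (htail : TailFinite φ) :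
    ∀ ε : ℝ, 0 < ε → ∃ δ : ℝ, 0 < δ ∧ ∀ x y : ℕ → ℝ,
      x ∈ cesOrlicz φ → y ∈ cesOrlicz φ → (∀ i, 0 ≤ x i) → (∀ i, 0 ≤ y i) →
      luxNorm φ x = 1 → ε ≤ luxNorm φ y → 1 + δ ≤ luxNorm φ (fun i => x i + y i) := by
  exact stmt_17' φ hfin hδ
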